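/- arXiv:2005.07853 — 4 statements merged into one kernel-verified Lean document; each statement's English description precedes it below -/
import Mathlib

section
/- Let S be a full-column-rank matrix H ∈ ℂ^{N_b×N_u} with pseudoinverse H† = (H^H H)^{-1} H^H, and let K ∈ ℂ^{N_b×N_b} be Hermitian positive definite. Then eig_min(H^H K^{-1} H) ≥ 1 / eig_max(H† K H†^H). -/
open Matrix ComplexOrder

lemma aux_shift {m n : ℕ} (M : Matrix (Fin m) (Fin n) ℂ) (u : Fin m → ℂ) (w : Fin n → ℂ) :
    star u ⬝ᵥ (M *ᵥ w) = star (Mᴴ *ᵥ u) ⬝ᵥ w := by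
  rw [star_mulVec, conjTranspose_conjTranspose, dotProduct_mulVec]

lemma rayleigh_upper {n : ℕ} (M : Matrix (Fin n) (Fin n) ℂ) (hM : M.IsHermitian)
    (x : Fin n → ℂ) (hx : star x ⬝ᵥ x = 1) :
    Complex.re (star x ⬝ᵥ (M *ᵥ x)) ≤ ⨆ i, hM.eigenvalues i := by
  set U : Matrix (Fin n) (Fin n) ℂ := (hM.eigenvectorUnitary : Matrix (Fin n) (Fin n) ℂ) with hU
  set y : Fin n → ℂ := star U *ᵥ x with hy
  have hUU : U * star U = 1 := (Matrix.mem_unitaryGroup_iff).mp hM.eigenvectorUnitary.2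
  have key : star x ⬝ᵥ (M *ᵥ x)
      = star y ⬝ᵥ (diagonal (RCLike.ofReal ∘ hM.eigenvalues) *ᵥ y) := by
    conv_lhs => rw [hM.spectral_theorem, Unitary.conjStarAlgAut_apply]
    rw [← Matrix.mulVec_mulVec, ← Matrix.mulVec_mulVec, aux_shift]
    rw [show Uᴴ = star U from rfl, hy]
  have hyy : star y ⬝ᵥ y = 1 := by
    rw [hy, aux_shift, Matrix.mulVec_mulVec]
    rw [show (star U)ᴴ = U by simp [Matrix.star_eq_conjTranspose], hUU, Matrix.one_mulVec, hx]
  have hnsq : ∑ i, Complex.normSq (y i) = 1 := by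
    have := congrArg Complex.re hyy
    simpa [dotProduct, Complex.normSq, Complex.mul_re, mul_comm] using this
  rw [key]
  have hdot : star y ⬝ᵥ (diagonal (RCLike.ofReal ∘ hM.eigenvalues) *ᵥ y)
      = ∑ i, ((hM.eigenvalues i : ℂ) * (Complex.normSq (y i) : ℂ)) := by
    unfold dotProduct
    refine Finset.sum_congr rfl fun i _ => ?_
    simp only [Matrix.mulVec_diagonal, Pi.star_apply, Function.comp_apply, RCLike.star_def]
    rw [Complex.normSq_eq_conj_mul_self, mul_left_comm]
    rfl
  rw [hdot]
  rw [Complex.re_sum]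
  have hle : ∀ i, Complex.re ((hM.eigenvalues i : ℂ) * (Complex.normSq (y i) : ℂ))
      ≤ (⨆ j, hM.eigenvalues j) * Complex.normSq (y i) := by
    intro i
    rw [← Complex.ofReal_mul, Complex.ofReal_re]
    exact mul_le_mul_of_nonneg_right
      (le_ciSup (Set.Finite.bddAbove (Set.finite_range _)) i) (Complex.normSq_nonneg _)
  calc ∑ i, Complex.re ((hM.eigenvalues i : ℂ) * (Complex.normSq (y i) : ℂ))
      ≤ ∑ i, (⨆ j, hM.eigenvalues j) * Complex.normSq (y i) := Finset.sum_le_sum fun i _ => hle i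
    _ = (⨆ j, hM.eigenvalues j) * ∑ i, Complex.normSq (y i) := by rw [Finset.mul_sum]
    _ = _ := by rw [hnsq, mul_one]

lemma aux_shift' {m n : ℕ} (M : Matrix (Fin m) (Fin n) ℂ) (u : Fin n → ℂ) (w : Fin m → ℂ) :
    star (M *ᵥ u) ⬝ᵥ w = star u ⬝ᵥ (Mᴴ *ᵥ w) := by
  rw [aux_shift Mᴴ u w, conjTranspose_conjTranspose]

/-- For full-column-rank H with pseudoinverse H† = (H^H H)⁻¹ H^H and Hermitian
positive definite K: eig_min(H^H K⁻¹ H) ≥ 1 / eig_max(H† K H†^H). -/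
theorem eigMin_lower_bound
    (Nb Nu : ℕ) (hNu : 0 < Nu)
    (H : Matrix (Fin Nb) (Fin Nu) ℂ) (hrank : H.rank = Nu)
    (K : Matrix (Fin Nb) (Fin Nb) ℂ) (hK : K.PosDef)
    (h1 : (Hᴴ * K⁻¹ * H).IsHermitian)
    (h2 : ((Hᴴ * H)⁻¹ * Hᴴ * K * ((Hᴴ * H)⁻¹ * Hᴴ)ᴴ).IsHermitian) :
    1 / (⨆ i, h2.eigenvalues i) ≤ ⨅ i, h1.eigenvalues i := by
  haveI : Nonempty (Fin Nu) := Fin.pos_iff_nonempty.mp hNu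
  -- Hᴴ * H is invertible
  have hrk : (Hᴴ * H).rank = Nu := by rw [Matrix.rank_conjTranspose_mul_self, hrank]
  have hHH : IsUnit (Hᴴ * H) := by
    rw [← Matrix.mulVec_injective_iff_isUnit]
    have hsurj : Function.Surjective (Hᴴ * H).mulVecLin := by
      rw [← LinearMap.range_eq_top]
      apply Submodule.eq_top_of_finrank_eq
      have : Module.finrank ℂ ↥(LinearMap.range (Hᴴ * H).mulVecLin) = (Hᴴ * H).rank := rfl
      rw [this, hrk, Module.finrank_fintype_fun_eq_card, Fintype.card_fin]
    have hinj := (LinearMap.injective_iff_surjective).mpr hsurj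
    intro p q hpq
    exact hinj (by simpa [Matrix.mulVecLin_apply] using hpq)
  have hdet : IsUnit (Hᴴ * H).det := (Matrix.isUnit_iff_isUnit_det _).mp hHH
  have hHdH : ((Hᴴ * H)⁻¹ * Hᴴ) * H = 1 := by
    rw [Matrix.mul_assoc, Matrix.nonsing_inv_mul _ hdet]
  -- square root of K
  obtain ⟨L, hLherm, hLK⟩ : ∃ L : Matrix (Fin Nb) (Fin Nb) ℂ, Lᴴ = L ∧ L * L = K :=
    by open scoped MatrixOrder in exact ⟨CFC.sqrt K, (CFC.sqrt_nonneg K).posSemidef.1,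
      CFC.sqrt_mul_sqrt_self K hK.posSemidef.nonneg⟩
  have hLdet : IsUnit L.det := by
    have hKd : K.det ≠ 0 := hK.det_pos.ne'
    have hmul : L.det * L.det = K.det := by rw [← Matrix.det_mul, hLK]
    have : L.det ≠ 0 := fun h => hKd (by rw [← hmul, h, mul_zero])
    exact this.isUnit
  have hLL : L * L⁻¹ = 1 := Matrix.mul_nonsing_inv _ hLdet
  have hKinv : K⁻¹ = L⁻¹ * L⁻¹ := by rw [← hLK, Matrix.mul_inv_rev]
  have hLinvH : (L⁻¹)ᴴ = L⁻¹ := by rw [Matrix.conjTranspose_nonsing_inv, hLherm]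
  refine le_ciInf fun i => ?_
  set v : Fin Nu → ℂ := ⇑(h1.eigenvectorBasis i) with hvdef
  have hv : star v ⬝ᵥ v = 1 := by
    have hn : ‖h1.eigenvectorBasis i‖ = 1 := h1.eigenvectorBasis.orthonormal.1 i
    have h := inner_self_eq_norm_sq_to_K (𝕜 := ℂ) (x := h1.eigenvectorBasis i)
    rw [hn] at h
    rw [EuclideanSpace.inner_eq_star_dotProduct, dotProduct_comm] at h
    simpa using h
  set a : Fin Nb → ℂ := ((Hᴴ * H)⁻¹ * Hᴴ)ᴴ *ᵥ v with hadef
  set b : Fin Nb → ℂ := H *ᵥ v with hbdef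
  set xx : Fin Nb → ℂ := L *ᵥ a with hxxdef
  set yy : Fin Nb → ℂ := L⁻¹ *ᵥ b with hyydef
  have hxy : star xx ⬝ᵥ yy = 1 := by
    rw [hxxdef, aux_shift', hLherm, hyydef, Matrix.mulVec_mulVec, hLL, Matrix.one_mulVec,
      hadef, aux_shift', conjTranspose_conjTranspose, hbdef, Matrix.mulVec_mulVec, hHdH,
      Matrix.one_mulVec, hv]
  have hxx : star xx ⬝ᵥ xx = star v ⬝ᵥ (((Hᴴ * H)⁻¹ * Hᴴ * K * ((Hᴴ * H)⁻¹ * Hᴴ)ᴴ) *ᵥ v) := by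
    rw [hxxdef, aux_shift', hLherm, Matrix.mulVec_mulVec, hLK,
      hadef, aux_shift', conjTranspose_conjTranspose, Matrix.mulVec_mulVec,
      Matrix.mulVec_mulVec]
  have hyy2 : star yy ⬝ᵥ yy = star v ⬝ᵥ ((Hᴴ * K⁻¹ * H) *ᵥ v) := by
    rw [hyydef, aux_shift', hLinvH, Matrix.mulVec_mulVec, ← hKinv,
      hbdef, aux_shift', Matrix.mulVec_mulVec, Matrix.mulVec_mulVec]
  -- Cauchy–Schwarz
  set X : EuclideanSpace ℂ (Fin Nb) := (WithLp.equiv 2 _).symm xx with hXdef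
  set Y : EuclideanSpace ℂ (Fin Nb) := (WithLp.equiv 2 _).symm yy with hYdef
  have hinner : (inner ℂ X Y : ℂ) = 1 := by
    rw [hXdef, hYdef]; show yy ⬝ᵥ star xx = 1; rw [dotProduct_comm]; exact hxy
  have h1le : (1 : ℝ) ≤ ‖X‖ * ‖Y‖ := by
    have h := norm_inner_le_norm (𝕜 := ℂ) X Y
    rwa [hinner, norm_one] at h
  have hXsq : ‖X‖ ^ 2 = Complex.re (star xx ⬝ᵥ xx) := by
    rw [← inner_self_eq_norm_sq (𝕜 := ℂ), hXdef]
    show RCLike.re (xx ⬝ᵥ star xx) = _; rw [dotProduct_comm]; rfl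
  have hYsq : ‖Y‖ ^ 2 = Complex.re (star yy ⬝ᵥ yy) := by
    rw [← inner_self_eq_norm_sq (𝕜 := ℂ), hYdef]
    show RCLike.re (yy ⬝ᵥ star yy) = _; rw [dotProduct_comm]; rfl
  have hsq : (1 : ℝ) ≤ ‖X‖ ^ 2 * ‖Y‖ ^ 2 := by nlinarith [norm_nonneg X, norm_nonneg Y]
  set S := ⨆ j, h2.eigenvalues j with hSdef
  set q := Complex.re (star v ⬝ᵥ (((Hᴴ * H)⁻¹ * Hᴴ * K * ((Hᴴ * H)⁻¹ * Hᴴ)ᴴ) *ᵥ v)) with hqdef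
  set lam := Complex.re (star v ⬝ᵥ ((Hᴴ * K⁻¹ * H) *ᵥ v)) with hlamdef
  have hlam : h1.eigenvalues i = lam := by
    simpa using h1.eigenvalues_eq i
  have hqS : q ≤ S := rayleigh_upper _ h2 v hv
  have hq0 : 0 ≤ q := by rw [hqdef, ← hxx, ← hXsq]; positivity
  have hlam0 : 0 ≤ lam := by rw [hlamdef, ← hyy2, ← hYsq]; positivity
  have hcore : (1 : ℝ) ≤ q * lam := by
    rw [hqdef, hlamdef, ← hxx, ← hyy2, ← hXsq, ← hYsq]; exact hsq
  have hS0 : (0 : ℝ) < S := by nlinarith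
  rw [hlam, div_le_iff₀ hS0]
  nlinarith
end

section
/- Let F: ℝ_{≥0}^n → ℝ_{>0}^n be a standard interference function, i.e., (positivity) F(λ) > 0 componentwise for all λ ≥ 0, (monotonicity) λ ≥ λ' componentwise implies F(λ) ≥ F(λ'), and (scalability) ρ > 1 implies ρF(λ) > F(ρλ) componentwise. If F has a fixed point λ* = F(λ*), then this fixed point is unique. -/
lemma standard_function_fixed_point_le
    (n : ℕ) (F : (Fin n → ℝ) → (Fin n → ℝ))
    (hpos : ∀ l : Fin n → ℝ, (∀ i, 0 ≤ l i) → ∀ i, 0 < F l i)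
    (hmono : ∀ l l' : Fin n → ℝ, (∀ i, 0 ≤ l' i) → (∀ i, l' i ≤ l i) →
      ∀ i, F l' i ≤ F l i)
    (hscale : ∀ ρ : ℝ, 1 < ρ → ∀ l : Fin n → ℝ, (∀ i, 0 ≤ l i) →
      ∀ i, F (ρ • l) i < ρ * F l i)
    (l₁ l₂ : Fin n → ℝ) (h1n : ∀ i, 0 ≤ l₁ i) (h2n : ∀ i, 0 ≤ l₂ i)
    (h1 : F l₁ = l₁) (h2 : F l₂ = l₂) :
    ∀ i, l₂ i ≤ l₁ i := by
  by_contra h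
  push_neg at h
  obtain ⟨j, hj⟩ := h
  have hne : (Finset.univ : Finset (Fin n)).Nonempty := ⟨j, Finset.mem_univ j⟩
  have h1pos : ∀ i, 0 < l₁ i := by
    intro i; rw [← h1]; exact hpos l₁ h1n i
  set ρ := Finset.univ.sup' hne (fun i => l₂ i / l₁ i) with hρ
  have hρ1 : 1 < ρ := by
    have : l₂ j / l₁ j ≤ ρ := by rw [hρ]; exact Finset.le_sup' (fun k => l₂ k / l₁ k) (Finset.mem_univ j)
    have hjj : 1 < l₂ j / l₁ j := (one_lt_div (h1pos j)).2 hj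
    linarith
  have hle : ∀ i, l₂ i ≤ ρ * l₁ i := by
    intro i
    have : l₂ i / l₁ i ≤ ρ := by rw [hρ]; exact Finset.le_sup' (fun k => l₂ k / l₁ k) (Finset.mem_univ i)
    calc l₂ i = (l₂ i / l₁ i) * l₁ i := (div_mul_cancel₀ _ (h1pos i).ne').symm
    _ ≤ ρ * l₁ i := by nlinarith [h1pos i]
  have hlt : ∀ i, l₂ i < ρ * l₁ i := by
    intro i
    have hρl : ∀ k, 0 ≤ (ρ • l₁) k := fun k => by
      have := h1pos k; simp only [Pi.smul_apply, smul_eq_mul]; nlinarith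
    calc l₂ i = F l₂ i := by rw [h2]
    _ ≤ F (ρ • l₁) i := hmono _ _ h2n (fun k => by
        simpa [smul_eq_mul] using hle k) i
    _ < ρ * F l₁ i := hscale ρ hρ1 l₁ h1n i
    _ = ρ * l₁ i := by rw [h1]
  obtain ⟨k, _, hk⟩ := Finset.exists_mem_eq_sup' hne (fun i => l₂ i / l₁ i)
  have : l₂ k = ρ * l₁ k := by
    rw [hρ, hk, div_mul_cancel₀ _ (h1pos k).ne']
  linarith [hlt k]

/-- Yates: a standard interference function (positive, monotone, scalable)
has at most one fixed point. -/
theorem standard_function_unique_fixed_point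
    (n : ℕ) (F : (Fin n → ℝ) → (Fin n → ℝ))
    (hpos : ∀ l : Fin n → ℝ, (∀ i, 0 ≤ l i) → ∀ i, 0 < F l i)
    (hmono : ∀ l l' : Fin n → ℝ, (∀ i, 0 ≤ l' i) → (∀ i, l' i ≤ l i) →
      ∀ i, F l' i ≤ F l i)
    (hscale : ∀ ρ : ℝ, 1 < ρ → ∀ l : Fin n → ℝ, (∀ i, 0 ≤ l i) →
      ∀ i, F (ρ • l) i < ρ * F l i)
    (l₁ l₂ : Fin n → ℝ) (h1n : ∀ i, 0 ≤ l₁ i) (h2n : ∀ i, 0 ≤ l₂ i)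
    (h1 : F l₁ = l₁) (h2 : F l₂ = l₂) :
    l₁ = l₂ := by
  have hA := standard_function_fixed_point_le n F hpos hmono hscale l₁ l₂ h1n h2n h1 h2
  have hB := standard_function_fixed_point_le n F hpos hmono hscale l₂ l₁ h2n h1n h2 h1
  funext i
  exact le_antisymm (hB i) (hA i)
end

section
/- Let F: ℝ_{≥0}^n → ℝ_{>0}^n be a standard interference function (positive, monotone, scalable) with a fixed point λ*. Then starting from the all-zero vector λ^{(0)} = 0, the iteration λ^{(n+1)} = F(λ^{(n)}) produces a componentwise nondecreasing sequence bounded above by λ*, hence convergent, and its limit is λ*. -/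
/-- Yates: for a standard interference function with fixed point λ*, the
iteration started from 0 is componentwise nondecreasing, bounded above by λ*,
and converges to λ*. -/
theorem standard_function_iteration_converges
    (n : ℕ) (F : (Fin n → ℝ) → (Fin n → ℝ))
    (hpos : ∀ l : Fin n → ℝ, (∀ i, 0 ≤ l i) → ∀ i, 0 < F l i)
    (hmono : ∀ l l' : Fin n → ℝ, (∀ i, 0 ≤ l' i) → (∀ i, l' i ≤ l i) →
      ∀ i, F l' i ≤ F l i)
    (hscale : ∀ ρ : ℝ, 1 < ρ → ∀ l : Fin n → ℝ, (∀ i, 0 ≤ l i) →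
      ∀ i, F (ρ • l) i < ρ * F l i)
    (lstar : Fin n → ℝ) (hstar_nonneg : ∀ i, 0 ≤ lstar i) (hstar : F lstar = lstar)
    (seq : ℕ → (Fin n → ℝ))
    (hseq0 : seq 0 = 0) (hseqS : ∀ k, seq (k + 1) = F (seq k)) :
    (∀ k i, seq k i ≤ seq (k + 1) i) ∧
      (∀ k i, seq k i ≤ lstar i) ∧
      Filter.Tendsto seq Filter.atTop (nhds lstar) := by
  have hnonneg : ∀ k i, 0 ≤ seq k i := by
    intro k
    induction k with
    | zero => intro i; simp [hseq0]
    | succ k ih => intro i; rw [hseqS]; exact (hpos _ ih i).le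
  have hmono' : ∀ k i, seq k i ≤ seq (k + 1) i := by
    intro k
    induction k with
    | zero =>
      intro i
      rw [hseqS, hseq0]
      have := hpos 0 (fun i => le_refl 0) i
      simpa using this.le
    | succ k ih =>
      intro i
      have h := hmono (seq (k+1)) (seq k) (hnonneg k) ih i
      rw [← hseqS k, ← hseqS (k+1)] at h
      exact h
  have hbdd : ∀ k i, seq k i ≤ lstar i := by
    intro k
    induction k with
    | zero => intro i; rw [hseq0]; exact hstar_nonneg i
    | succ k ih =>
      intro i
      rw [hseqS]
      calc F (seq k) i ≤ F lstar i := hmono _ _ (hnonneg k) ih i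
        _ = lstar i := by rw [hstar]
  have hmonoK : ∀ i, Monotone (fun k => seq k i) := fun i =>
    monotone_nat_of_le_succ (fun k => hmono' k i)
  set L : Fin n → ℝ := fun i => ⨆ k, seq k i with hLdef
  have hbddAbove : ∀ i, BddAbove (Set.range fun k => seq k i) :=
    fun i => ⟨lstar i, by rintro x ⟨k, rfl⟩; exact hbdd k i⟩
  have hle_L : ∀ k i, seq k i ≤ L i := fun k i => le_ciSup (hbddAbove i) k
  have hL_le : ∀ i, L i ≤ lstar i := fun i => ciSup_le (fun k => hbdd k i)
  have hL_nonneg : ∀ i, 0 ≤ L i := fun i => (hnonneg 0 i).trans (hle_L 0 i)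
  have hL_pos : ∀ i, 0 < L i := fun i => by
    have h1 : 0 < seq 1 i := by rw [hseqS 0]; exact hpos _ (hnonneg 0) i
    exact h1.trans_le (hle_L 1 i)
  have htendsto : ∀ i, Filter.Tendsto (fun k => seq k i) Filter.atTop (nhds (L i)) :=
    fun i => tendsto_atTop_ciSup (hmonoK i) (hbddAbove i)
  have hLFL : ∀ i, L i ≤ F L i := by
    intro i
    apply ciSup_le
    intro k
    calc seq k i ≤ seq (k+1) i := hmono' k i
      _ = F (seq k) i := by rw [hseqS]
      _ ≤ F L i := hmono _ _ (hnonneg k) (fun j => hle_L k j) i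
  have hFLrho : ∀ ρ : ℝ, 1 < ρ → ∀ i, F L i ≤ ρ * L i := by
    intro ρ hρ
    have hev : ∀ᶠ k in Filter.atTop, ∀ i, L i ≤ ρ * seq k i := by
      rw [Filter.eventually_all]
      intro i
      have ht : Filter.Tendsto (fun k => ρ * seq k i) Filter.atTop (nhds (ρ * L i)) :=
        (htendsto i).const_mul ρ
      have hlt : L i < ρ * L i := by nlinarith [hL_pos i]
      exact ht.eventually (eventually_ge_nhds hlt)
    obtain ⟨k, hk⟩ := hev.exists
    intro i
    refine le_of_lt ?_
    calc F L i ≤ F (ρ • seq k) i := by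
          refine hmono _ _ hL_nonneg (fun j => ?_) i
          simpa [Pi.smul_apply, smul_eq_mul] using hk j
      _ < ρ * F (seq k) i := hscale ρ hρ _ (hnonneg k) i
      _ = ρ * seq (k+1) i := by rw [hseqS]
      _ ≤ ρ * L i := by nlinarith [hle_L (k+1) i]
  have hFL_le : ∀ i, F L i ≤ L i := by
    intro i
    by_contra h
    push_neg at h
    have hρ : 1 < (L i + F L i) / (2 * L i) := by
      rw [lt_div_iff₀ (by nlinarith [hL_pos i])]
      nlinarith [hL_pos i]
    have h3 := hFLrho _ hρ i
    have heq : (L i + F L i) / (2 * L i) * L i = (L i + F L i) / 2 := by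
      field_simp [(hL_pos i).ne']
    rw [heq] at h3
    linarith
  have hfix : F L = L := funext fun i => le_antisymm (hFL_le i) (hLFL i)
  have hstar_le_L : ∀ i, lstar i ≤ L i := by
    by_contra h
    push_neg at h
    obtain ⟨j, hj⟩ := h
    obtain ⟨j0, -, hj0⟩ := Finset.exists_max_image Finset.univ (fun i => lstar i / L i)
      ⟨j, Finset.mem_univ j⟩
    set ρ := lstar j0 / L j0 with hρdef
    have hρ1 : 1 < ρ := lt_of_lt_of_le ((one_lt_div (hL_pos j)).mpr hj)
      (hj0 j (Finset.mem_univ j))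
    have hbound : ∀ i, lstar i ≤ ρ * L i := by
      intro i
      have h1 : lstar i / L i ≤ ρ := hj0 i (Finset.mem_univ i)
      have h2 : lstar i / L i * L i = lstar i := div_mul_cancel₀ _ (hL_pos i).ne'
      rw [← h2]
      exact mul_le_mul_of_nonneg_right h1 (hL_nonneg i)
    have heq : ρ * L j0 = lstar j0 := by
      rw [hρdef, mul_comm]
      exact mul_div_cancel₀ _ (hL_pos j0).ne'
    have hcontra : lstar j0 < ρ * L j0 := by
      calc lstar j0 = F lstar j0 := by rw [hstar]
        _ ≤ F (ρ • L) j0 := by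
            refine hmono _ _ hstar_nonneg (fun i => ?_) j0
            simpa [Pi.smul_apply, smul_eq_mul] using hbound i
        _ < ρ * F L j0 := hscale ρ hρ1 _ hL_nonneg j0
        _ = ρ * L j0 := by rw [hfix]
    rw [heq] at hcontra
    exact lt_irrefl _ hcontra
  have hfinal : L = lstar := funext fun i => le_antisymm (hL_le i) (hstar_le_L i)
  refine ⟨hmono', hbdd, ?_⟩
  rw [← hfinal]
  exact tendsto_pi_nhds.mpr htendsto
end

section
/- Fix α ∈ (0,1], γ > 0, nonzero h ∈ ℂ^{N_b}, and for λ ∈ ℝ_{≥0}^m define K(λ) = I + α ∑_k λ_k h_k h_k^H + (1−α) diag(∑_k λ_k h_k h_k^H) for fixed vectors h_k ∈ ℂ^{N_b}. Then the map 𝓕(λ) = 1 / (α(1 + 1/γ) h^H K(λ)^{-1} h) satisfies: (i) 𝓕(λ) > 0 for all λ ≥ 0; (ii) λ ≥ λ' componentwise implies 𝓕(λ) ≥ 𝓕(λ'); (iii) for ρ > 1, ρ𝓕(λ) > 𝓕(ρλ). -/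
open Matrix BigOperators

/-- The interference matrix K(λ) = I + α ∑_k λ_k h_k h_k^H + (1−α) diag(∑_k λ_k h_k h_k^H). -/
noncomputable def Kmat (Nb m : ℕ) (α : ℝ) (hv : Fin m → (Fin Nb → ℂ))
    (l : Fin m → ℝ) : Matrix (Fin Nb) (Fin Nb) ℂ :=
  1 + (α : ℂ) • (∑ k, ((l k : ℝ) : ℂ) • Matrix.vecMulVec (hv k) (star (hv k)))
    + ((1 - α : ℝ) : ℂ) •
        Matrix.diagonal ((∑ k, ((l k : ℝ) : ℂ) • Matrix.vecMulVec (hv k) (star (hv k))).diag)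

/-- The power-update map 𝓕(λ) = 1 / (α(1 + 1/γ) h^H K(λ)⁻¹ h). -/
noncomputable def Fmap (Nb m : ℕ) (α γ : ℝ) (h : Fin Nb → ℂ)
    (hv : Fin m → (Fin Nb → ℂ)) (l : Fin m → ℝ) : ℝ :=
  1 / (α * (1 + 1 / γ) * (star h ⬝ᵥ ((Kmat Nb m α hv l)⁻¹).mulVec h).re)

set_option linter.unusedSectionVars false

open scoped ComplexOrder

section Helpers

variable {n : Type*} [Fintype n] [DecidableEq n]

lemma psd_vecMulVec (v : n → ℂ) : (Matrix.vecMulVec v (star v)).PosSemidef := by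
  rw [Matrix.posSemidef_iff_dotProduct_mulVec]
  constructor
  · ext i j
    simp [Matrix.conjTranspose_apply, Matrix.vecMulVec_apply, mul_comm]
  · intro x
    have hmv : Matrix.vecMulVec v (star v) *ᵥ x = (star v ⬝ᵥ x) • v := by
      ext i
      simp only [Matrix.mulVec, Matrix.vecMulVec_apply, dotProduct, Pi.smul_apply,
        smul_eq_mul, Finset.sum_mul]
      exact Finset.sum_congr rfl fun j _ => by ring
    rw [hmv, dotProduct_smul, smul_eq_mul]
    have hsx : star x ⬝ᵥ v = star (star v ⬝ᵥ x) := by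
      rw [star_dotProduct]
    rw [hsx]
    exact mul_star_self_nonneg _

lemma psd_smul_real {A : Matrix n n ℂ} (hA : A.PosSemidef) {c : ℝ} (hc : 0 ≤ c) :
    (((c : ℂ)) • A).PosSemidef := by
  rw [Matrix.posSemidef_iff_dotProduct_mulVec]
  constructor
  · rw [Matrix.IsHermitian, Matrix.conjTranspose_smul, hA.isHermitian.eq]
    congr 1
    simp
  · intro x
    rw [Matrix.smul_mulVec, dotProduct_smul, smul_eq_mul]
    exact mul_nonneg (by exact_mod_cast hc) (hA.dotProduct_mulVec_nonneg x)

lemma pd_smul_real {A : Matrix n n ℂ} (hA : A.PosDef) {c : ℝ} (hc : 0 < c) :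
    (((c : ℂ)) • A).PosDef := by
  rw [Matrix.posDef_iff_dotProduct_mulVec]
  constructor
  · rw [Matrix.IsHermitian, Matrix.conjTranspose_smul, hA.isHermitian.eq]
    congr 1
    simp
  · intro x hx
    rw [Matrix.smul_mulVec, dotProduct_smul, smul_eq_mul]
    have h0 : (0:ℂ) < (c:ℂ) := by exact_mod_cast hc
    exact mul_pos h0 (hA.dotProduct_mulVec_pos hx)

lemma diag_psd {M : Matrix n n ℂ} (hM : M.PosSemidef) :
    (Matrix.diagonal M.diag).PosSemidef := by
  refine Matrix.PosSemidef.diagonal fun i => ?_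
  simpa [Matrix.diag, dotProduct, Pi.single_apply, apply_ite] using hM.dotProduct_mulVec_nonneg (Pi.single i 1)

lemma inv_form_le {A B : Matrix n n ℂ} (hA : A.PosDef) (hB : B.PosDef)
    (hAB : (A - B).PosSemidef) (x : n → ℂ) :
    (star x ⬝ᵥ A⁻¹ *ᵥ x).re ≤ (star x ⬝ᵥ B⁻¹ *ᵥ x).re := by
  have hdA : IsUnit A.det := hA.det_pos.ne'.isUnit
  have hdB : IsUnit B.det := hB.det_pos.ne'.isUnit
  set y := A⁻¹ *ᵥ x with hy
  set z := x - B *ᵥ y with hz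
  have hAy : A *ᵥ y = x := by
    rw [hy, Matrix.mulVec_mulVec, Matrix.mul_nonsing_inv _ hdA, Matrix.one_mulVec]
  have hBz : B⁻¹ *ᵥ z = B⁻¹ *ᵥ x - y := by
    rw [hz, Matrix.mulVec_sub, Matrix.mulVec_mulVec, Matrix.nonsing_inv_mul _ hdB,
      Matrix.one_mulVec]
  have hsBy : ∀ w : n → ℂ, star (B *ᵥ y) ⬝ᵥ w = star y ⬝ᵥ B *ᵥ w := by
    intro w
    rw [Matrix.star_mulVec, hB.isHermitian.eq, ← Matrix.dotProduct_mulVec]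
  have e1 : star z ⬝ᵥ B⁻¹ *ᵥ z
      = star x ⬝ᵥ B⁻¹ *ᵥ x - star x ⬝ᵥ y - star y ⬝ᵥ x + star y ⬝ᵥ B *ᵥ y := by
    rw [hBz, hz]
    rw [show star (x - B *ᵥ y) = star x - star (B *ᵥ y) from star_sub _ _]
    rw [sub_dotProduct, dotProduct_sub, dotProduct_sub, hsBy, hsBy,
      Matrix.mulVec_mulVec, Matrix.mul_nonsing_inv _ hdB, Matrix.one_mulVec]
    ring
  have e2 : star y ⬝ᵥ (A - B) *ᵥ y = star y ⬝ᵥ x - star y ⬝ᵥ B *ᵥ y := by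
    rw [Matrix.sub_mulVec, dotProduct_sub, hAy]
  have main : star x ⬝ᵥ B⁻¹ *ᵥ x
      = star x ⬝ᵥ A⁻¹ *ᵥ x + (star z ⬝ᵥ B⁻¹ *ᵥ z + star y ⬝ᵥ (A - B) *ᵥ y) := by
    rw [e1, e2, ← hy]
    ring
  have h1 : 0 ≤ star z ⬝ᵥ B⁻¹ *ᵥ z := hB.inv.posSemidef.dotProduct_mulVec_nonneg z
  have h2 : 0 ≤ star y ⬝ᵥ (A - B) *ᵥ y := hAB.dotProduct_mulVec_nonneg y
  have h3 : 0 ≤ (star z ⬝ᵥ B⁻¹ *ᵥ z + star y ⬝ᵥ (A - B) *ᵥ y).re := by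
    have := add_nonneg h1 h2
    simpa using (Complex.le_def.mp this).1
  rw [main, Complex.add_re]
  linarith

lemma inv_form_lt {A B : Matrix n n ℂ} (hA : A.PosDef) (hB : B.PosDef)
    (hAB : (A - B).PosDef) {x : n → ℂ} (hx : x ≠ 0) :
    (star x ⬝ᵥ A⁻¹ *ᵥ x).re < (star x ⬝ᵥ B⁻¹ *ᵥ x).re := by
  have hdA : IsUnit A.det := hA.det_pos.ne'.isUnit
  have hdB : IsUnit B.det := hB.det_pos.ne'.isUnit
  set y := A⁻¹ *ᵥ x with hy
  set z := x - B *ᵥ y with hz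
  have hAy : A *ᵥ y = x := by
    rw [hy, Matrix.mulVec_mulVec, Matrix.mul_nonsing_inv _ hdA, Matrix.one_mulVec]
  have hBz : B⁻¹ *ᵥ z = B⁻¹ *ᵥ x - y := by
    rw [hz, Matrix.mulVec_sub, Matrix.mulVec_mulVec, Matrix.nonsing_inv_mul _ hdB,
      Matrix.one_mulVec]
  have hsBy : ∀ w : n → ℂ, star (B *ᵥ y) ⬝ᵥ w = star y ⬝ᵥ B *ᵥ w := by
    intro w
    rw [Matrix.star_mulVec, hB.isHermitian.eq, ← Matrix.dotProduct_mulVec]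
  have e1 : star z ⬝ᵥ B⁻¹ *ᵥ z
      = star x ⬝ᵥ B⁻¹ *ᵥ x - star x ⬝ᵥ y - star y ⬝ᵥ x + star y ⬝ᵥ B *ᵥ y := by
    rw [hBz, hz]
    rw [show star (x - B *ᵥ y) = star x - star (B *ᵥ y) from star_sub _ _]
    rw [sub_dotProduct, dotProduct_sub, dotProduct_sub, hsBy, hsBy,
      Matrix.mulVec_mulVec, Matrix.mul_nonsing_inv _ hdB, Matrix.one_mulVec]
    ring
  have e2 : star y ⬝ᵥ (A - B) *ᵥ y = star y ⬝ᵥ x - star y ⬝ᵥ B *ᵥ y := by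
    rw [Matrix.sub_mulVec, dotProduct_sub, hAy]
  have main : star x ⬝ᵥ B⁻¹ *ᵥ x
      = star x ⬝ᵥ A⁻¹ *ᵥ x + (star z ⬝ᵥ B⁻¹ *ᵥ z + star y ⬝ᵥ (A - B) *ᵥ y) := by
    rw [e1, e2, ← hy]
    ring
  have hyne : y ≠ 0 := by
    intro h0
    apply hx
    rw [← hAy, h0, Matrix.mulVec_zero]
  have h1 : 0 ≤ star z ⬝ᵥ B⁻¹ *ᵥ z := hB.inv.posSemidef.dotProduct_mulVec_nonneg z
  have h2 : 0 < star y ⬝ᵥ (A - B) *ᵥ y := hAB.dotProduct_mulVec_pos hyne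
  have h3 : 0 < (star z ⬝ᵥ B⁻¹ *ᵥ z + star y ⬝ᵥ (A - B) *ᵥ y).re := by
    have := add_pos_of_nonneg_of_pos h1 h2
    simpa using (Complex.lt_def.mp this).1
  rw [main, Complex.add_re]
  linarith

end Helpers

noncomputable def Smat (Nb m : ℕ) (hv : Fin m → (Fin Nb → ℂ))
    (l : Fin m → ℝ) : Matrix (Fin Nb) (Fin Nb) ℂ :=
  ∑ k, ((l k : ℝ) : ℂ) • Matrix.vecMulVec (hv k) (star (hv k))

lemma Kmat_eq (Nb m : ℕ) (α : ℝ) (hv : Fin m → (Fin Nb → ℂ)) (l : Fin m → ℝ) :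
    Kmat Nb m α hv l = 1 + (α : ℂ) • Smat Nb m hv l
      + ((1 - α : ℝ) : ℂ) • Matrix.diagonal (Smat Nb m hv l).diag := rfl

lemma Smat_psd (Nb m : ℕ) (hv : Fin m → (Fin Nb → ℂ)) {l : Fin m → ℝ}
    (hl : ∀ k, 0 ≤ l k) : (Smat Nb m hv l).PosSemidef := by
  unfold Smat
  induction (Finset.univ : Finset (Fin m)) using Finset.induction_on with
  | empty => simpa using Matrix.PosSemidef.zero
  | insert a s hnot ih =>
    rw [Finset.sum_insert hnot]
    exact (psd_smul_real (psd_vecMulVec _) (hl _)).add ih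

lemma Kmat_posDef (Nb m : ℕ) {α : ℝ} (hα : 0 < α ∧ α ≤ 1)
    (hv : Fin m → (Fin Nb → ℂ)) {l : Fin m → ℝ} (hl : ∀ k, 0 ≤ l k) :
    (Kmat Nb m α hv l).PosDef := by
  rw [Kmat_eq]
  have hS := Smat_psd Nb m hv hl
  have h1 := psd_smul_real hS hα.1.le
  have h2 := psd_smul_real (diag_psd hS) (by linarith [hα.2] : (0:ℝ) ≤ 1 - α)
  exact (Matrix.PosDef.one.add_posSemidef h1).add_posSemidef h2

lemma Smat_sub (Nb m : ℕ) (hv : Fin m → (Fin Nb → ℂ)) (l l' : Fin m → ℝ) :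
    Smat Nb m hv l - Smat Nb m hv l' = Smat Nb m hv (l - l') := by
  unfold Smat
  rw [← Finset.sum_sub_distrib]
  refine Finset.sum_congr rfl fun k _ => ?_
  rw [← sub_smul]
  congr 1
  push_cast
  simp

lemma Kmat_sub (Nb m : ℕ) (α : ℝ) (hv : Fin m → (Fin Nb → ℂ)) (l l' : Fin m → ℝ) :
    Kmat Nb m α hv l - Kmat Nb m α hv l'
      = (α : ℂ) • Smat Nb m hv (l - l')
        + ((1 - α : ℝ) : ℂ) • Matrix.diagonal (Smat Nb m hv (l - l')).diag := by
  rw [Kmat_eq, Kmat_eq]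
  have hS := Smat_sub Nb m hv l l'
  have hD : Matrix.diagonal (Smat Nb m hv l).diag - Matrix.diagonal (Smat Nb m hv l').diag
      = Matrix.diagonal (Smat Nb m hv (l - l')).diag := by
    rw [← hS, Matrix.diag_sub, Matrix.diagonal_sub]
    rfl
  calc 1 + (α : ℂ) • Smat Nb m hv l + ((1 - α : ℝ) : ℂ) • Matrix.diagonal (Smat Nb m hv l).diag
        - (1 + (α : ℂ) • Smat Nb m hv l'
            + ((1 - α : ℝ) : ℂ) • Matrix.diagonal (Smat Nb m hv l').diag)
      = ((α : ℂ) • Smat Nb m hv l - (α : ℂ) • Smat Nb m hv l')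
        + (((1 - α : ℝ) : ℂ) • Matrix.diagonal (Smat Nb m hv l).diag
            - ((1 - α : ℝ) : ℂ) • Matrix.diagonal (Smat Nb m hv l').diag) := by abel
    _ = (α : ℂ) • Smat Nb m hv (l - l')
        + ((1 - α : ℝ) : ℂ) • Matrix.diagonal (Smat Nb m hv (l - l')).diag := by
        rw [← smul_sub, ← smul_sub, hS, hD]

lemma Smat_smul (Nb m : ℕ) (hv : Fin m → (Fin Nb → ℂ)) (ρ : ℝ) (l : Fin m → ℝ) :
    Smat Nb m hv (ρ • l) = (ρ : ℂ) • Smat Nb m hv l := by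
  unfold Smat
  rw [Finset.smul_sum]
  refine Finset.sum_congr rfl fun k _ => ?_
  rw [smul_smul]
  congr 1
  push_cast
  simp

lemma Kmat_rho (Nb m : ℕ) (α : ℝ) (hv : Fin m → (Fin Nb → ℂ)) (ρ : ℝ) (l : Fin m → ℝ) :
    (ρ : ℂ) • Kmat Nb m α hv l - Kmat Nb m α hv (ρ • l) = ((ρ - 1 : ℝ) : ℂ) • 1 := by
  rw [Kmat_eq, Kmat_eq, Smat_smul]
  have hD : Matrix.diagonal ((ρ : ℂ) • Smat Nb m hv l).diag
      = (ρ : ℂ) • Matrix.diagonal (Smat Nb m hv l).diag := by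
    rw [Matrix.diag_smul, Matrix.diagonal_smul]
  rw [hD]
  rw [smul_add, smul_add, smul_comm (α : ℂ) (ρ : ℂ), smul_comm ((1 - α : ℝ) : ℂ) (ρ : ℂ)]
  rw [show ((ρ - 1 : ℝ) : ℂ) = (ρ : ℂ) - 1 by push_cast; ring, sub_smul, one_smul]
  abel

/-- The map 𝓕 is a standard interference function: positive, monotone, and scalable. -/
theorem Fmap_is_standard
    (Nb m : ℕ) (α γ : ℝ) (hα : 0 < α ∧ α ≤ 1) (hγ : 0 < γ)
    (h : Fin Nb → ℂ) (hh : h ≠ 0) (hv : Fin m → (Fin Nb → ℂ)) :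
    (∀ l : Fin m → ℝ, (∀ k, 0 ≤ l k) → 0 < Fmap Nb m α γ h hv l) ∧
      (∀ l l' : Fin m → ℝ, (∀ k, 0 ≤ l' k) → (∀ k, l' k ≤ l k) →
        Fmap Nb m α γ h hv l' ≤ Fmap Nb m α γ h hv l) ∧
      (∀ ρ : ℝ, 1 < ρ → ∀ l : Fin m → ℝ, (∀ k, 0 ≤ l k) →
        Fmap Nb m α γ h hv (ρ • l) < ρ * Fmap Nb m α γ h hv l) := by
  obtain ⟨hα0, hα1⟩ := hα
  have hc : 0 < α * (1 + 1 / γ) := by positivity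
  have qpos : ∀ l : Fin m → ℝ, (∀ k, 0 ≤ l k) →
      0 < (star h ⬝ᵥ (Kmat Nb m α hv l)⁻¹ *ᵥ h).re := by
    intro l hl
    have := ((Kmat_posDef Nb m ⟨hα0, hα1⟩ hv hl).inv).re_dotProduct_pos hh
    simpa using this
  refine ⟨?_, ?_, ?_⟩
  · intro l hl
    unfold Fmap
    exact one_div_pos.mpr (mul_pos hc (qpos l hl))
  · intro l l' hl' hle
    have hl : ∀ k, 0 ≤ l k := fun k => le_trans (hl' k) (hle k)
    have hKl := Kmat_posDef Nb m ⟨hα0, hα1⟩ hv hl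
    have hKl' := Kmat_posDef Nb m ⟨hα0, hα1⟩ hv hl'
    have hdiff : (Kmat Nb m α hv l - Kmat Nb m α hv l').PosSemidef := by
      rw [Kmat_sub]
      have hS := Smat_psd Nb m hv (l := l - l') (fun k => sub_nonneg.mpr (hle k))
      exact (psd_smul_real hS hα0.le).add
        (psd_smul_real (diag_psd hS) (by linarith : (0:ℝ) ≤ 1 - α))
    have hq := inv_form_le hKl hKl' hdiff h
    unfold Fmap
    apply one_div_le_one_div_of_le
    · exact mul_pos hc (qpos l hl)
    · exact mul_le_mul_of_nonneg_left hq hc.le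
  · intro ρ hρ l hl
    have hρ0 : (0:ℝ) < ρ := lt_trans one_pos hρ
    have hl2 : ∀ k, 0 ≤ (ρ • l) k := fun k => by
      simpa [Pi.smul_apply, smul_eq_mul] using mul_nonneg hρ0.le (hl k)
    have hK := Kmat_posDef Nb m ⟨hα0, hα1⟩ hv hl
    have hK2 := Kmat_posDef Nb m ⟨hα0, hα1⟩ hv hl2
    have hρK : ((ρ : ℂ) • Kmat Nb m α hv l).PosDef := pd_smul_real hK hρ0
    have hdiff : ((ρ : ℂ) • Kmat Nb m α hv l - Kmat Nb m α hv (ρ • l)).PosDef := by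
      rw [Kmat_rho]
      exact pd_smul_real Matrix.PosDef.one (by linarith : (0:ℝ) < ρ - 1)
    have hlt := inv_form_lt hρK hK2 hdiff hh
    have hρc : (ρ : ℂ) ≠ 0 := by exact_mod_cast hρ0.ne'
    have hinv : ((ρ : ℂ) • Kmat Nb m α hv l)⁻¹ = (ρ : ℂ)⁻¹ • (Kmat Nb m α hv l)⁻¹ := by
      letI := invertibleOfNonzero hρc
      rw [Matrix.inv_smul (A := Kmat Nb m α hv l) ((ρ:ℂ)) hK.det_pos.ne'.isUnit]
      congr 1
    have hform : (star h ⬝ᵥ ((ρ : ℂ) • Kmat Nb m α hv l)⁻¹ *ᵥ h).re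
        = ρ⁻¹ * (star h ⬝ᵥ (Kmat Nb m α hv l)⁻¹ *ᵥ h).re := by
      rw [hinv, Matrix.smul_mulVec, dotProduct_smul, smul_eq_mul,
        show ((ρ : ℂ)⁻¹) = ((ρ⁻¹ : ℝ) : ℂ) by push_cast; ring, Complex.re_ofReal_mul]
    rw [hform] at hlt
    unfold Fmap
    set q1 := (star h ⬝ᵥ (Kmat Nb m α hv l)⁻¹ *ᵥ h).re with hq1def
    set q2 := (star h ⬝ᵥ (Kmat Nb m α hv (ρ • l))⁻¹ *ᵥ h).re with hq2def
    have hq1 : 0 < q1 := qpos l hl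
    have hq2 : 0 < q2 := qpos _ hl2
    have step : 1 / (α * (1 + 1 / γ) * q2) < 1 / (α * (1 + 1 / γ) * (ρ⁻¹ * q1)) := by
      apply one_div_lt_one_div_of_lt
      · exact mul_pos hc (mul_pos (inv_pos.mpr hρ0) hq1)
      · exact mul_lt_mul_of_pos_left hlt hc
    have eq1 : 1 / (α * (1 + 1 / γ) * (ρ⁻¹ * q1)) = ρ * (1 / (α * (1 + 1 / γ) * q1)) := by
      field_simp
    calc 1 / (α * (1 + 1 / γ) * q2) < 1 / (α * (1 + 1 / γ) * (ρ⁻¹ * q1)) := step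
      _ = ρ * (1 / (α * (1 + 1 / γ) * q1)) := eq1
end
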